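/- Let D₁ = [[e,0,0],[0,1,0],[0,1,1]] and D₂ = [[1/2,0,0],[0,1,0],[0,−ln 2,1]], acting as linear maps on ℝ³ (column vectors). If C ⊆ ℝ³ is a closed convex cone such that D₁(C) ⊆ C, D₂(C) ⊆ C, the point (1,1,0) belongs to C, and the point (1,−1,−1) belongs to the dual cone C*, then C = K_exp. -/

import Mathlib

section
open Real

/-- The exponential cone
`K_exp = {(x₁,x₂,x₃) : x₂ > 0, x₁ ≥ x₂·exp(x₃/x₂)} ∪ {(x₁,0,x₃) : x₁ ≥ 0, x₃ ≤ 0}`. -/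
def Kexp : Set (Fin 3 → ℝ) :=
  {x | 0 < x 1 ∧ x 1 * Real.exp (x 2 / x 1) ≤ x 0} ∪
  {x | x 1 = 0 ∧ 0 ≤ x 0 ∧ x 2 ≤ 0}

/-- The dual cone of `C ⊆ ℝ³` with respect to the standard inner product. -/
def dualCone (C : Set (Fin 3 → ℝ)) : Set (Fin 3 → ℝ) :=
  {y | ∀ x ∈ C, 0 ≤ y 0 * x 0 + y 1 * x 1 + y 2 * x 2}

/-- `D₁ = [[e,0,0],[0,1,0],[0,1,1]]` acting on column vectors. -/
noncomputable def D1 (x : Fin 3 → ℝ) : Fin 3 → ℝ :=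
  ![Real.exp 1 * x 0, x 1, x 1 + x 2]

/-- `D₂ = [[1/2,0,0],[0,1,0],[0,−ln 2,1]]` acting on column vectors. -/
noncomputable def D2 (x : Fin 3 → ℝ) : Fin 3 → ℝ :=
  ![(1 / 2) * x 0, x 1, -Real.log 2 * x 1 + x 2]

end

open Polynomial Finset Nat

namespace KexpAux

noncomputable def Pn (p n : ℕ) : ℤ[X] := (C (p:ℤ) - X)^n * X^n

lemma dvd_eval_zero (p n j : ℕ) : ((n ! : ℤ)) ∣ (derivative^[j] (Pn p n)).eval 0 := by
  rw [← coeff_zero_eq_eval_zero, coeff_iterate_derivative]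
  simp only [zero_add, Nat.descFactorial_self, nsmul_eq_mul]
  rcases lt_or_ge j n with h | h
  · have : (Pn p n).coeff j = 0 := by
      rw [Pn, coeff_mul_X_pow']
      simp [Nat.not_le.mpr h]
    simp [this]
  · exact Dvd.dvd.mul_right (Int.natCast_dvd_natCast.mpr (Nat.factorial_dvd_factorial h)) _

lemma iterate_derivative_comp_linear (Q : ℤ[X]) (c : ℤ) (j : ℕ) :
    derivative^[j] (Q.comp (C c - X)) = (-1)^j * ((derivative^[j] Q).comp (C c - X)) := by
  induction j with
  | zero => simp
  | succ j ih =>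
    have hd : derivative ((-1:ℤ[X])^j) = 0 := by
      rw [derivative_pow]; simp
    rw [Function.iterate_succ_apply', ih, derivative_mul, hd, zero_mul, zero_add,
      derivative_comp, Function.iterate_succ_apply']
    simp only [derivative_sub, derivative_C, derivative_X, zero_sub, pow_succ]
    ring

lemma Pn_comp (p n : ℕ) : (Pn p n).comp (C (p:ℤ) - X) = Pn p n := by
  rw [Pn, mul_comp, pow_comp, pow_comp, sub_comp, C_comp, X_comp]
  ring_nf

lemma dvd_eval_p (p n j : ℕ) : ((n ! : ℤ)) ∣ (derivative^[j] (Pn p n)).eval (p:ℤ) := by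
  conv_lhs => skip
  have h1 : (derivative^[j] (Pn p n)).eval (p:ℤ)
      = ((-1:ℤ))^j * (derivative^[j] (Pn p n)).eval 0 := by
    conv_lhs => rw [← Pn_comp p n, iterate_derivative_comp_linear]
    rw [eval_mul, eval_comp]
    simp
  rw [h1]
  exact (dvd_eval_zero p n j).mul_left _

end KexpAux

namespace KexpAux
open Polynomial Finset Nat

noncomputable def Fn (p n : ℕ) : ℤ[X] := ∑ j ∈ range (2*n+1), derivative^[j] (Pn p n)

lemma Pn_natDegree_lt (p n : ℕ) : (Pn p n).natDegree < 2*n+1 := by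
  have h1 : (Pn p n).natDegree ≤ n * 1 + n := by
    refine le_trans (natDegree_mul_le) ?_
    gcongr
    · exact le_trans (natDegree_pow_le) (by
        gcongr
        exact le_trans (natDegree_sub_le _ _) (by simp))
    · simp [natDegree_X_pow]
  omega

lemma derivative_Fn (p n : ℕ) : derivative (Fn p n) = Fn p n - Pn p n := by
  have h0 : derivative (Fn p n) = ∑ j ∈ range (2*n+1), derivative^[j+1] (Pn p n) := by
    rw [Fn, map_sum]
    exact Finset.sum_congr rfl fun j _ => (Function.iterate_succ_apply' _ _ _).symm
  have h1 : ∑ j ∈ range (2*n+1+1), derivative^[j] (Pn p n)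
      = (∑ j ∈ range (2*n+1), derivative^[j+1] (Pn p n)) + derivative^[0] (Pn p n) :=
    Finset.sum_range_succ' _ _
  have h2 : ∑ j ∈ range (2*n+1+1), derivative^[j] (Pn p n)
      = Fn p n + derivative^[2*n+1] (Pn p n) := Finset.sum_range_succ _ _
  have h3 : derivative^[2*n+1] (Pn p n) = 0 :=
    iterate_derivative_eq_zero (Pn_natDegree_lt p n)
  rw [h0]
  have := h1.symm.trans h2
  rw [h3, add_zero] at this
  simp only [Function.iterate_zero, id_eq] at this
  linear_combination (norm := abel) this

lemma dvd_Fn_eval_zero (p n : ℕ) : ((n ! : ℤ)) ∣ (Fn p n).eval 0 := by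
  rw [Fn, eval_finset_sum]
  exact Finset.dvd_sum fun j _ => dvd_eval_zero p n j

lemma dvd_Fn_eval_p (p n : ℕ) : ((n ! : ℤ)) ∣ (Fn p n).eval (p:ℤ) := by
  rw [Fn, eval_finset_sum]
  exact Finset.dvd_sum fun j _ => dvd_eval_p p n j

end KexpAux

namespace KexpAux
open Polynomial Finset Nat

lemma aeval_Pn (p n : ℕ) (x : ℝ) : aeval x (Pn p n) = ((p:ℝ) - x)^n * x^n := by
  simp [Pn]

lemma exp_nat_ne_nat (p N : ℕ) (hp : 1 ≤ p) (hN : 2 ≤ N) : Real.exp p ≠ N := by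
  intro hE
  have hp0 : (0:ℝ) < p := by exact_mod_cast hp
  have hN0 : (0:ℝ) < N := by positivity
  -- choose n with N * p^(2n+1) < n!
  obtain ⟨n, hn⟩ : ∃ n : ℕ, (N:ℝ) * (p:ℝ)^(2*n+1) < n ! := by
    have h := FloorSemiring.tendsto_pow_div_factorial_atTop (K := ℝ) ((p:ℝ)^2)
    have h2 := h.eventually (eventually_lt_nhds (show (0:ℝ) < ((N:ℝ)*(p:ℝ))⁻¹ by positivity))
    obtain ⟨n, hn⟩ := h2.exists
    refine ⟨n, ?_⟩
    have hfac : (0:ℝ) < (n ! : ℝ) := by exact_mod_cast Nat.factorial_pos n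
    rw [div_lt_iff₀ hfac] at hn
    have : ((p:ℝ)^2)^n = (p:ℝ)^(2*n) := by rw [← pow_mul]
    rw [this] at hn
    have hpos : (0:ℝ) < (N:ℝ)*(p:ℝ) := by positivity
    have h3 := mul_lt_mul_of_pos_left hn hpos
    have h4 : (N:ℝ)*(p:ℝ) * (((N:ℝ)*(p:ℝ))⁻¹ * (n ! : ℝ)) = (n ! :ℝ) := by field_simp
    calc (N:ℝ) * (p:ℝ)^(2*n+1) = (N:ℝ)*(p:ℝ) * (p:ℝ)^(2*n) := by ring
    _ < (N:ℝ)*(p:ℝ) * (((N:ℝ)*(p:ℝ))⁻¹ * (n ! : ℝ)) := h3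
    _ = (n ! : ℝ) := h4
  -- the integral
  set F := Fn p n with hF
  set u : ℝ → ℝ := fun x => Real.exp (-x) * aeval x F with hu
  have hcont : Continuous fun x : ℝ => Real.exp (-x) * aeval x (Pn p n) :=
    (Real.continuous_exp.comp continuous_neg).mul (Pn p n).continuous_aeval
  have hint : IntervalIntegrable (fun x : ℝ => Real.exp (-x) * aeval x (Pn p n))
      MeasureTheory.volume 0 (p:ℝ) := hcont.intervalIntegrable _ _
  have hderiv : ∀ x : ℝ, HasDerivAt u (-(Real.exp (-x) * aeval x (Pn p n))) x := by
    intro x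
    have h1 : HasDerivAt (fun x : ℝ => Real.exp (-x)) (-Real.exp (-x)) x := by
      simpa [Function.comp_def] using (Real.hasDerivAt_exp (-x)).comp x ((hasDerivAt_id x).neg)
    have h2 := F.hasDerivAt_aeval (𝕜 := ℝ) x
    have h3 := h1.mul h2
    refine h3.congr_deriv ?_
    rw [hF, derivative_Fn, map_sub]
    ring
  have hFTC : ∫ x in (0:ℝ)..(p:ℝ), -(Real.exp (-x) * aeval x (Pn p n)) = u p - u 0 :=
    intervalIntegral.integral_eq_sub_of_hasDerivAt (fun x _ => hderiv x) hint.neg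
  set I := ∫ x in (0:ℝ)..(p:ℝ), Real.exp (-x) * aeval x (Pn p n) with hI
  have hIval : I = u 0 - u p := by
    have h := hFTC
    rw [intervalIntegral.integral_neg] at h
    rw [hI]
    linarith [h]
  have hIpos : 0 < I := by
    refine intervalIntegral.intervalIntegral_pos_of_pos_on hint ?_ hp0
    intro x hx
    have h1 : 0 < Real.exp (-x) := Real.exp_pos _
    have h2 : 0 < aeval x (Pn p n) := by
      rw [aeval_Pn]
      have hx1 : 0 < x := hx.1
      have hx2 : 0 < (p:ℝ) - x := by have := hx.2; linarith
      exact mul_pos (pow_pos hx2 n) (pow_pos hx1 n)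
    exact mul_pos h1 h2
  have hIle : I ≤ (p:ℝ)^(2*n+1) := by
    have hmono := intervalIntegral.integral_mono_on (μ := MeasureTheory.volume)
      (f := fun x : ℝ => Real.exp (-x) * aeval x (Pn p n))
      (g := fun _ : ℝ => (p:ℝ)^(2*n)) (le_of_lt hp0) hint
      (intervalIntegrable_const) ?_
    · have : ∫ _ in (0:ℝ)..(p:ℝ), (p:ℝ)^(2*n) = (p:ℝ) * (p:ℝ)^(2*n) := by
        rw [intervalIntegral.integral_const, smul_eq_mul, sub_zero]
      rw [hI]
      calc (∫ x in (0:ℝ)..(p:ℝ), Real.exp (-x) * aeval x (Pn p n)) ≤ _ := hmono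
      _ = (p:ℝ) * (p:ℝ)^(2*n) := this
      _ = (p:ℝ)^(2*n+1) := by ring
    · intro x hx
      rw [aeval_Pn]
      have hx0 := hx.1
      have hxp := hx.2
      have he : Real.exp (-x) ≤ 1 := Real.exp_le_one_iff.mpr (by linarith)
      have hb : ((p:ℝ) - x)^n * x^n ≤ (p:ℝ)^n * (p:ℝ)^n := by
        gcongr <;> linarith
      calc Real.exp (-x) * (((p:ℝ) - x)^n * x^n) ≤ 1 * ((p:ℝ)^n * (p:ℝ)^n) := by
            apply mul_le_mul he hb
              (mul_nonneg (pow_nonneg (by linarith) n) (pow_nonneg (by linarith) n)) (by norm_num)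
      _ = (p:ℝ)^(2*n) := by rw [one_mul, ← pow_add]; ring_nf
  -- integer identity
  have hexpneg : Real.exp (-(p:ℝ)) = (N:ℝ)⁻¹ := by
    rw [Real.exp_neg, hE]
  have haeval0 : aeval (0:ℝ) F = ((F.eval 0 : ℤ) : ℝ) := by
    rw [aeval_def, ← eval_map, algebraMap_int_eq]
    simpa using Polynomial.eval_intCast_map (Int.castRingHom ℝ) F 0
  have haevalp : aeval ((p:ℕ):ℝ) F = ((F.eval (p:ℤ) : ℤ) : ℝ) := by
    rw [aeval_def, ← eval_map, algebraMap_int_eq]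
    simpa using Polynomial.eval_intCast_map (Int.castRingHom ℝ) F (p:ℤ)
  set K : ℤ := N * F.eval 0 - F.eval (p:ℤ) with hK
  have hKreal : (K : ℝ) = (N:ℝ) * I := by
    rw [hIval, hu]
    simp only [neg_zero, Real.exp_zero, one_mul]
    rw [haeval0, haevalp, hexpneg, hK]
    push_cast
    field_simp
  have hKdvd : ((n ! : ℤ)) ∣ K := by
    rw [hK]
    exact dvd_sub ((dvd_Fn_eval_zero p n).mul_left _) (dvd_Fn_eval_p p n)
  have hKpos : 0 < K := by
    have : (0:ℝ) < (K:ℝ) := by rw [hKreal]; positivity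
    exact_mod_cast this
  have hKlt : (K:ℝ) < (n ! : ℝ) := by
    rw [hKreal]
    calc (N:ℝ) * I ≤ (N:ℝ) * (p:ℝ)^(2*n+1) := by gcongr
    _ < (n ! : ℝ) := hn
  have hle : ((n ! : ℤ)) ≤ K := Int.le_of_dvd hKpos hKdvd
  have : ((n ! : ℤ) : ℝ) ≤ (K:ℝ) := by exact_mod_cast hle
  rw [show (((n ! : ℤ)) : ℝ) = ((n ! : ℕ) : ℝ) by push_cast; ring] at this
  linarith

end KexpAux

namespace KexpAux
open Nat

lemma toNat_cast_real {a : ℤ} (h : 0 ≤ a) : ((a.toNat : ℕ) : ℝ) = (a:ℝ) := by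
  rw [show ((a.toNat:ℕ):ℝ) = ((a.toNat:ℤ):ℝ) by push_cast; ring, Int.toNat_of_nonneg h]

lemma log_two_irr (a b : ℤ) (h : (b:ℝ) * Real.log 2 = (a:ℝ)) : b = 0 := by
  by_contra hb
  -- wlog b > 0
  wlog hbpos : 0 < b generalizing a b
  · refine this (-a) (-b) ?_ (by omega) (by omega)
    push_cast
    linarith [h]
  have hlog2 : (0:ℝ) < Real.log 2 := Real.log_pos (by norm_num)
  have hapos : (0:ℝ) < (a:ℝ) := by
    rw [← h]
    positivity
  have ha0 : (0:ℤ) < a := by exact_mod_cast hapos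
  set m : ℕ := a.toNat with hm
  set n : ℕ := b.toNat with hn
  have hma : (m:ℝ) = (a:ℝ) := toNat_cast_real (by omega)
  have hnb : (n:ℝ) = (b:ℝ) := toNat_cast_real (by omega)
  have hkey : Real.exp (m:ℝ) = ((2^n : ℕ) : ℝ) := by
    rw [hma, ← h, ← hnb]
    rw [Real.exp_nat_mul, Real.exp_log (by norm_num)]
    push_cast
    ring
  have hm1 : 1 ≤ m := by omega
  have hn2 : 2 ≤ 2^n := by
    have hn1 : 1 ≤ n := by omega
    calc 2 = 2^1 := (pow_one 2).symm
    _ ≤ 2^n := Nat.pow_le_pow_right (by norm_num) hn1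
  exact exp_nat_ne_nat m (2^n) hm1 hn2 hkey

def Tset : Set ℝ := {t | ∃ m n : ℕ, t = (m:ℝ) - (n:ℝ) * Real.log 2}

lemma Tset_add {s t : ℝ} (hs : s ∈ Tset) (ht : t ∈ Tset) : s + t ∈ Tset := by
  obtain ⟨a, b, rfl⟩ := hs
  obtain ⟨c, d, rfl⟩ := ht
  exact ⟨a + c, b + d, by push_cast; ring⟩

lemma Tset_nsmul (k : ℕ) {t : ℝ} (ht : t ∈ Tset) : (k:ℝ) * t ∈ Tset := by
  obtain ⟨a, b, rfl⟩ := ht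
  exact ⟨k * a, k * b, by push_cast; ring⟩

lemma one_mem_Tset : (1:ℝ) ∈ Tset := ⟨1, 0, by norm_num⟩

lemma neg_log_two_mem_Tset : -Real.log 2 ∈ Tset := ⟨0, 1, by norm_num⟩

lemma zero_mem_Tset : (0:ℝ) ∈ Tset := ⟨0, 0, by norm_num⟩

lemma small_elt {ε : ℝ} (hε : 0 < ε) (hε2 : ε ≤ 1/2) :
    (∃ t ∈ Tset, 0 < t ∧ t < ε) ∨ (∃ t ∈ Tset, -ε < t ∧ t < 0) := by
  have hlog2lt : Real.log 2 < 0.6931471808 := Real.log_two_lt_d9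
  have hlog2gt : (0.6931471803 : ℝ) < Real.log 2 := Real.log_two_gt_d9
  set G := AddSubgroup.closure ({(1:ℝ), Real.log 2} : Set ℝ) with hG
  rcases AddSubgroup.dense_or_cyclic G with hd | ⟨a, ha⟩
  · -- dense case
    obtain ⟨g, hgG, hgI⟩ := hd.exists_mem_open isOpen_Ioo
      (⟨ε/2, by constructor <;> linarith⟩ : (Set.Ioo 0 ε).Nonempty)
    have hgG' : g ∈ AddSubgroup.closure ({(1:ℝ), Real.log 2} : Set ℝ) := hgG
    rw [AddSubgroup.mem_closure_pair] at hgG'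
    obtain ⟨m, n, hmn⟩ := hgG' 
    rw [zsmul_eq_mul, zsmul_eq_mul, mul_one] at hmn
    obtain ⟨hg0, hgε⟩ := hgI
    rcases lt_trichotomy n 0 with hn | hn | hn
    · left
      refine ⟨g, ⟨m.toNat, (-n).toNat, ?_⟩, hg0, hgε⟩
      have hmpos : (0:ℝ) < (m:ℝ) := by
        have hn1 : n ≤ -1 := by omega
        have : (n:ℝ) ≤ -1 := by exact_mod_cast hn1
        nlinarith [hmn]
      have hm0 : 0 ≤ m := by exact_mod_cast le_of_lt (by exact_mod_cast hmpos : (0:ℤ) < m)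
      have h1 : ((m.toNat : ℕ) : ℝ) = (m:ℝ) := toNat_cast_real hm0
      have h2 : (((-n).toNat : ℕ) : ℝ) = -(n:ℝ) := by
        rw [toNat_cast_real (by omega)]
        push_cast
        ring
      rw [h1, h2, ← hmn]
      ring
    · exfalso
      subst hn
      push_cast at hmn
      -- g = m, integer in (0, 1/2)
      have : (0:ℝ) < (m:ℝ) := by linarith [hmn]
      have hm1 : (1:ℝ) ≤ (m:ℝ) := by exact_mod_cast (by exact_mod_cast this : (0:ℤ) < m)
      linarith [hmn]
    · right
      refine ⟨-g, ⟨(-m).toNat, n.toNat, ?_⟩, by linarith, by linarith⟩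
      have hmneg : (m:ℝ) < 0 := by nlinarith [hmn, (by exact_mod_cast hn : (1:ℝ) ≤ (n:ℝ))]
      have hm0 : 0 ≤ -m := by
        have : m < 0 := by exact_mod_cast hmneg
        omega
      have h1 : (((-m).toNat : ℕ) : ℝ) = -(m:ℝ) := by
        rw [toNat_cast_real hm0]
        push_cast
        ring
      have h2 : ((n.toNat : ℕ) : ℝ) = (n:ℝ) := toNat_cast_real (by omega)
      rw [h1, h2, ← hmn]
      ring
  · -- cyclic case: contradiction with irrationality
    exfalso
    have h1G : (1:ℝ) ∈ G := AddSubgroup.subset_closure (by simp)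
    have hlG : Real.log 2 ∈ G := AddSubgroup.subset_closure (by simp)
    rw [ha, AddSubgroup.mem_closure_singleton] at h1G hlG
    obtain ⟨k, hk⟩ := h1G
    obtain ⟨l, hl⟩ := hlG
    rw [zsmul_eq_mul] at hk hl
    have hk0 : k ≠ 0 := by
      intro h0
      rw [h0] at hk
      norm_num at hk
    have : (k:ℝ) * Real.log 2 = (l:ℝ) := by
      calc (k:ℝ) * Real.log 2 = (k:ℝ) * ((l:ℝ)*a) := by rw [hl]
      _ = (l:ℝ) * ((k:ℝ)*a) := by ring
      _ = (l:ℝ) := by rw [hk, mul_one]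
    exact hk0 (log_two_irr l k this)

end KexpAux

namespace KexpAux

lemma both_small {ε : ℝ} (hε : 0 < ε) (hε2 : ε ≤ 1/2) :
    (∃ t ∈ Tset, 0 < t ∧ t < ε) ∧ (∃ t ∈ Tset, -ε < t ∧ t < 0) := by
  classical
  have hlog2gt : (0.6931471803 : ℝ) < Real.log 2 := Real.log_two_gt_d9
  rcases small_elt hε hε2 with ⟨tp, htpT, htp0, htpε⟩ | ⟨tm, htmT, htmε, htm0⟩
  · refine ⟨⟨tp, htpT, htp0, htpε⟩, ?_⟩
    have hex : ∃ k : ℕ, -ε < -Real.log 2 + (k:ℝ) * tp := by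
      obtain ⟨k, hk⟩ := exists_nat_gt ((Real.log 2 - ε) / tp)
      refine ⟨k, ?_⟩
      have := (div_lt_iff₀ htp0).mp hk
      linarith
    set k := Nat.find hex with hkdef
    have hspec : -ε < -Real.log 2 + (k:ℝ) * tp := Nat.find_spec hex
    have hk0 : k ≠ 0 := by
      intro h0
      rw [h0] at hspec
      simp at hspec
      linarith
    have hmin : ¬(-ε < -Real.log 2 + ((k-1 : ℕ):ℝ) * tp) := Nat.find_min hex (by omega)
    push_neg at hmin
    have hkk : ((k-1 : ℕ):ℝ) = (k:ℝ) - 1 := by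
      have h1 : 1 ≤ k := by omega
      push_cast [h1]
      ring
    rw [hkk] at hmin
    have hupper : -Real.log 2 + (k:ℝ) * tp < 0 := by nlinarith
    exact ⟨-Real.log 2 + (k:ℝ) * tp,
      Tset_add neg_log_two_mem_Tset (Tset_nsmul k htpT), hspec, hupper⟩
  · refine ⟨?_, ⟨tm, htmT, htmε, htm0⟩⟩
    have hex : ∃ k : ℕ, 1 + (k:ℝ) * tm < ε := by
      obtain ⟨k, hk⟩ := exists_nat_gt ((1 - ε) / (-tm))
      refine ⟨k, ?_⟩
      have htm0' : 0 < -tm := by linarith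
      have := (div_lt_iff₀ htm0').mp hk
      linarith
    set k := Nat.find hex with hkdef
    have hspec : 1 + (k:ℝ) * tm < ε := Nat.find_spec hex
    have hk0 : k ≠ 0 := by
      intro h0
      rw [h0] at hspec
      simp at hspec
      linarith
    have hmin : ¬(1 + ((k-1 : ℕ):ℝ) * tm < ε) := Nat.find_min hex (by omega)
    push_neg at hmin
    have hkk : ((k-1 : ℕ):ℝ) = (k:ℝ) - 1 := by
      have h1 : 1 ≤ k := by omega
      push_cast [h1]
      ring
    rw [hkk] at hmin
    have hlower : 0 < 1 + (k:ℝ) * tm := by nlinarith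
    exact ⟨1 + (k:ℝ) * tm,
      Tset_add one_mem_Tset (Tset_nsmul k htmT), hlower, hspec⟩

lemma Tset_approx (x : ℝ) {ε : ℝ} (hε : 0 < ε) (hε2 : ε ≤ 1/2) :
    ∃ v ∈ Tset, |v - x| < ε := by
  classical
  obtain ⟨⟨tp, htpT, htp0, htpε⟩, ⟨tm, htmT, htmε, htm0⟩⟩ := both_small hε hε2
  rcases le_or_gt 0 x with hx | hx
  · have hex : ∃ k : ℕ, x - ε < (k:ℝ) * tp := by
      obtain ⟨k, hk⟩ := exists_nat_gt ((x - ε) / tp)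
      exact ⟨k, by have := (div_lt_iff₀ htp0).mp hk; linarith⟩
    set k := Nat.find hex with hkdef
    have hspec : x - ε < (k:ℝ) * tp := Nat.find_spec hex
    have hupper : (k:ℝ) * tp ≤ x := by
      rcases Nat.eq_zero_or_pos k with h0 | hpos
      · rw [h0]; simpa using hx
      · have hmin : ¬(x - ε < ((k-1 : ℕ):ℝ) * tp) := Nat.find_min hex (by omega)
        push_neg at hmin
        have hkk : ((k-1 : ℕ):ℝ) = (k:ℝ) - 1 := by
          have h1 : 1 ≤ k := hpos
          push_cast [h1]
          ring
        rw [hkk] at hmin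
        nlinarith
    exact ⟨(k:ℝ) * tp, Tset_nsmul k htpT, by rw [abs_lt]; constructor <;> linarith⟩
  · have hex : ∃ k : ℕ, (k:ℝ) * tm < x + ε := by
      obtain ⟨k, hk⟩ := exists_nat_gt ((-(x + ε)) / (-tm))
      have htm0' : 0 < -tm := by linarith
      refine ⟨k, ?_⟩
      have := (div_lt_iff₀ htm0').mp hk
      nlinarith
    set k := Nat.find hex with hkdef
    have hspec : (k:ℝ) * tm < x + ε := Nat.find_spec hex
    have hlower : x ≤ (k:ℝ) * tm := by
      rcases Nat.eq_zero_or_pos k with h0 | hpos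
      · rw [h0]; simp; linarith
      · have hmin : ¬(((k-1 : ℕ):ℝ) * tm < x + ε) := Nat.find_min hex (by omega)
        push_neg at hmin
        have hkk : ((k-1 : ℕ):ℝ) = (k:ℝ) - 1 := by
          have h1 : 1 ≤ k := hpos
          push_cast [h1]
          ring
        rw [hkk] at hmin
        nlinarith
    exact ⟨(k:ℝ) * tm, Tset_nsmul k htmT, by rw [abs_lt]; constructor <;> linarith⟩

lemma dense_Tset : Dense Tset := by
  rw [Metric.dense_iff]
  intro x r hr
  set ε := min r (1/2) / 2 with hε
  have hε0 : 0 < ε := by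
    have : (0:ℝ) < min r (1/2) := lt_min hr (by norm_num)
    positivity
  have hε2 : ε ≤ 1/2 := by
    have h1 : min r (1/2) ≤ 1/2 := min_le_right _ _
    rw [hε]; linarith
  have hεr : ε < r := by
    have h1 : min r (1/2) ≤ r := min_le_left _ _
    have : (0:ℝ) < min r (1/2) := lt_min hr (by norm_num)
    rw [hε]; linarith
  obtain ⟨v, hvT, hv⟩ := Tset_approx x hε0 hε2
  exact ⟨v, Metric.mem_ball.mpr (by rw [Real.dist_eq]; linarith [hv]), hvT⟩

end KexpAux



open Real

namespace KexpAux

lemma curve_step1 {C : Set (Fin 3 → ℝ)} (hD1 : Set.MapsTo D1 C C) {t : ℝ}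
    (h : (![Real.exp t, 1, t] : Fin 3 → ℝ) ∈ C) :
    (![Real.exp (t+1), 1, t+1] : Fin 3 → ℝ) ∈ C := by
  have h2 := hD1 h
  have heq : D1 (![Real.exp t, 1, t] : Fin 3 → ℝ) = ![Real.exp (t+1), 1, t+1] := by
    funext i
    fin_cases i
    · show Real.exp 1 * Real.exp t = Real.exp (t+1)
      rw [Real.exp_add]; ring
    · rfl
    · show (1:ℝ) + t = t + 1
      ring
  rwa [heq] at h2

lemma curve_step2 {C : Set (Fin 3 → ℝ)} (hD2 : Set.MapsTo D2 C C) {t : ℝ}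
    (h : (![Real.exp t, 1, t] : Fin 3 → ℝ) ∈ C) :
    (![Real.exp (t - Real.log 2), 1, t - Real.log 2] : Fin 3 → ℝ) ∈ C := by
  have h2 := hD2 h
  have heq : D2 (![Real.exp t, 1, t] : Fin 3 → ℝ)
      = ![Real.exp (t - Real.log 2), 1, t - Real.log 2] := by
    funext i
    fin_cases i
    · show (1/2 : ℝ) * Real.exp t = Real.exp (t - Real.log 2)
      rw [Real.exp_sub, Real.exp_log (by norm_num : (0:ℝ) < 2)]
      ring
    · rfl
    · show -Real.log 2 * 1 + t = t - Real.log 2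
      ring
  rwa [heq] at h2

lemma dual_step1 {C : Set (Fin 3 → ℝ)} (hD1 : Set.MapsTo D1 C C) {t : ℝ}
    (h : (![Real.exp t, -1 - t, -1] : Fin 3 → ℝ) ∈ dualCone C) :
    (![Real.exp (t+1), -1 - (t+1), -1] : Fin 3 → ℝ) ∈ dualCone C := by
  intro x hx
  have h2 : 0 ≤ Real.exp t * (Real.exp 1 * x 0) + (-1 - t) * x 1 + (-1) * (x 1 + x 2) :=
    h (D1 x) (hD1 hx)
  show 0 ≤ Real.exp (t+1) * x 0 + (-1 - (t+1)) * x 1 + (-1) * x 2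
  have heq : Real.exp (t+1) * x 0 + (-1 - (t+1)) * x 1 + (-1) * x 2
      = Real.exp t * (Real.exp 1 * x 0) + (-1 - t) * x 1 + (-1) * (x 1 + x 2) := by
    rw [Real.exp_add]; ring
  rw [heq]; exact h2

lemma dual_step2 {C : Set (Fin 3 → ℝ)} (hD2 : Set.MapsTo D2 C C) {t : ℝ}
    (h : (![Real.exp t, -1 - t, -1] : Fin 3 → ℝ) ∈ dualCone C) :
    (![Real.exp (t - Real.log 2), -1 - (t - Real.log 2), -1] : Fin 3 → ℝ) ∈ dualCone C := by
  intro x hx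
  have h2 : 0 ≤ Real.exp t * ((1/2) * x 0) + (-1 - t) * x 1 + (-1) * (-Real.log 2 * x 1 + x 2) :=
    h (D2 x) (hD2 hx)
  show 0 ≤ Real.exp (t - Real.log 2) * x 0 + (-1 - (t - Real.log 2)) * x 1 + (-1) * x 2
  have heq : Real.exp (t - Real.log 2) * x 0 + (-1 - (t - Real.log 2)) * x 1 + (-1) * x 2
      = Real.exp t * ((1/2) * x 0) + (-1 - t) * x 1 + (-1) * (-Real.log 2 * x 1 + x 2) := by
    rw [Real.exp_sub, Real.exp_log (by norm_num : (0:ℝ) < 2)]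
    ring
  rw [heq]; exact h2

end KexpAux


/-- Any closed convex cone `C` stable under `D₁` and `D₂`, containing `(1,1,0)` and with
`(1,−1,−1)` in its dual cone, equals the exponential cone. -/
theorem stable_cone_eq_Kexp (C : Set (Fin 3 → ℝ))
    (hclosed : IsClosed C) (hconv : Convex ℝ C)
    (hcone : ∀ (c : ℝ) (x : Fin 3 → ℝ), 0 ≤ c → x ∈ C → c • x ∈ C)
    (hD1 : Set.MapsTo D1 C C) (hD2 : Set.MapsTo D2 C C)
    (hτ : (![1, 1, 0] : Fin 3 → ℝ) ∈ C)
    (hπ : (![1, -1, -1] : Fin 3 → ℝ) ∈ dualCone C) :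
    C = Kexp := by
  -- Part B: the curve (e^t, 1, t) lies in C
  have hcurveT : ∀ m n : ℕ,
      (![Real.exp ((m:ℝ) - (n:ℝ)*Real.log 2), 1, (m:ℝ) - (n:ℝ)*Real.log 2] : Fin 3 → ℝ) ∈ C := by
    intro m n
    induction n with
    | zero =>
      induction m with
      | zero => simpa using hτ
      | succ m ihm =>
        have h2 := KexpAux.curve_step1 hD1 ihm
        have he : ((m:ℝ) - (0:ℕ)*Real.log 2) + 1 = (((m+1:ℕ)):ℝ) - ((0:ℕ):ℝ)*Real.log 2 := by
          push_cast; ring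
        rwa [he] at h2
    | succ n ihn =>
      have h2 := KexpAux.curve_step2 hD2 ihn
      have he : ((m:ℝ) - (n:ℕ)*Real.log 2) - Real.log 2
          = ((m:ℕ):ℝ) - (((n+1:ℕ)):ℝ)*Real.log 2 := by
        push_cast; ring
      rwa [he] at h2
  have hcurve : ∀ t : ℝ, (![Real.exp t, 1, t] : Fin 3 → ℝ) ∈ C := by
    have hcont : Continuous fun t : ℝ => (![Real.exp t, 1, t] : Fin 3 → ℝ) := by
      refine continuous_pi fun i => ?_
      fin_cases i
      · simpa using Real.continuous_exp
      · simpa using continuous_const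
      · simpa using continuous_id'
    have hclsdS : IsClosed {t : ℝ | (![Real.exp t, 1, t] : Fin 3 → ℝ) ∈ C} :=
      hclosed.preimage hcont
    have hsub : KexpAux.Tset ⊆ {t : ℝ | (![Real.exp t, 1, t] : Fin 3 → ℝ) ∈ C} := by
      rintro t ⟨m, n, rfl⟩
      exact hcurveT m n
    intro t
    have h1 : t ∈ closure KexpAux.Tset := by rw [KexpAux.dense_Tset.closure_eq]; trivial
    exact closure_minimal hsub hclsdS h1
  -- limit points
  have h100 : (![1,0,0] : Fin 3 → ℝ) ∈ C := by
    have hseq : ∀ k : ℕ,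
        (![1, Real.exp (-(k:ℝ)), (k:ℝ) * Real.exp (-(k:ℝ))] : Fin 3 → ℝ) ∈ C := by
      intro k
      have hm := hcone (Real.exp (-(k:ℝ))) _ (Real.exp_pos _).le (hcurve (k:ℝ))
      have heq : Real.exp (-(k:ℝ)) • (![Real.exp (k:ℝ), 1, (k:ℝ)] : Fin 3 → ℝ)
          = ![1, Real.exp (-(k:ℝ)), (k:ℝ) * Real.exp (-(k:ℝ))] := by
        funext i
        fin_cases i
        · show Real.exp (-(k:ℝ)) * Real.exp (k:ℝ) = 1
          rw [← Real.exp_add]; simp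
        · show Real.exp (-(k:ℝ)) * 1 = Real.exp (-(k:ℝ)); ring
        · show Real.exp (-(k:ℝ)) * (k:ℝ) = (k:ℝ) * Real.exp (-(k:ℝ)); ring
      rwa [heq] at hm
    refine hclosed.mem_of_tendsto (b := (Filter.atTop : Filter ℕ)) ?_
      (Filter.Eventually.of_forall hseq)
    rw [tendsto_pi_nhds]
    intro i
    fin_cases i
    · simpa using (tendsto_const_nhds :
        Filter.Tendsto (fun _ : ℕ => (1:ℝ)) Filter.atTop (nhds 1))
    · simpa using tendsto_natCast_atTop_atTop (R := ℝ)
    · have h2 := (Real.tendsto_pow_mul_exp_neg_atTop_nhds_zero 1).comp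
        (tendsto_natCast_atTop_atTop (R := ℝ))
      simpa [Function.comp_def] using h2
  have h00m1 : (![0,0,-1] : Fin 3 → ℝ) ∈ C := by
    have hseq : ∀ k : ℕ,
        (![Real.exp (-((k:ℝ)+1)) * ((k:ℝ)+1)⁻¹, ((k:ℝ)+1)⁻¹, -1] : Fin 3 → ℝ) ∈ C := by
      intro k
      have hk : (0:ℝ) < (k:ℝ)+1 := by positivity
      have hm := hcone (((k:ℝ)+1)⁻¹) _ (by positivity) (hcurve (-((k:ℝ)+1)))
      have heq : (((k:ℝ)+1)⁻¹) • (![Real.exp (-((k:ℝ)+1)), 1, -((k:ℝ)+1)] : Fin 3 → ℝ)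
          = ![Real.exp (-((k:ℝ)+1)) * ((k:ℝ)+1)⁻¹, ((k:ℝ)+1)⁻¹, -1] := by
        funext i
        fin_cases i
        · show ((k:ℝ)+1)⁻¹ * Real.exp (-((k:ℝ)+1)) = Real.exp (-((k:ℝ)+1)) * ((k:ℝ)+1)⁻¹
          ring
        · show ((k:ℝ)+1)⁻¹ * 1 = ((k:ℝ)+1)⁻¹; ring
        · show ((k:ℝ)+1)⁻¹ * -((k:ℝ)+1) = -1
          field_simp
      rwa [heq] at hm
    refine hclosed.mem_of_tendsto (b := (Filter.atTop : Filter ℕ)) ?_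
      (Filter.Eventually.of_forall hseq)
    rw [tendsto_pi_nhds]
    intro i
    have hinv : Filter.Tendsto (fun k : ℕ => ((k:ℝ)+1)⁻¹) Filter.atTop (nhds 0) := by
      have : Filter.Tendsto (fun n : ℕ => 1 / ((n : ℝ) + 1)) Filter.atTop (nhds 0) :=
        tendsto_one_div_add_atTop_nhds_zero_nat
      simpa [one_div] using this
    fin_cases i
    · have hexp : Filter.Tendsto (fun k : ℕ => Real.exp (-((k:ℝ)+1))) Filter.atTop (nhds 0) := by
        refine Real.tendsto_exp_neg_atTop_nhds_zero.comp ?_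
        exact Filter.tendsto_atTop_add_const_right _ 1 (tendsto_natCast_atTop_atTop (R := ℝ))
      have h2 := hexp.mul hinv
      simpa using h2
    · simpa using hinv
    · simpa using (tendsto_const_nhds :
        Filter.Tendsto (fun _ : ℕ => (-1:ℝ)) Filter.atTop (nhds (-1)))
  -- C is closed under addition
  have hadd : ∀ u, u ∈ C → ∀ v, v ∈ C → u + v ∈ C := by
    intro u hu v hv
    have hmid := hconv hu hv (by norm_num : (0:ℝ) ≤ 1/2) (by norm_num : (0:ℝ) ≤ 1/2)
      (by norm_num : (1:ℝ)/2 + 1/2 = 1)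
    have h2 := hcone 2 _ (by norm_num) hmid
    have heq : (2:ℝ) • ((1/2 : ℝ) • u + (1/2 : ℝ) • v) = u + v := by
      funext i
      simp [smul_eq_mul]
      ring
    rwa [heq] at h2
  -- Part A: dual curve
  have hdualT : ∀ t : ℝ, ∀ x ∈ C, 0 ≤ Real.exp t * x 0 - (1 + t) * x 1 - x 2 := by
    have hstep : ∀ m n : ℕ,
        (![Real.exp ((m:ℝ) - (n:ℝ)*Real.log 2), -1 - ((m:ℝ) - (n:ℝ)*Real.log 2), -1]
          : Fin 3 → ℝ) ∈ dualCone C := by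
      intro m n
      induction n with
      | zero =>
        induction m with
        | zero => simpa using hπ
        | succ m ihm =>
          have h2 := KexpAux.dual_step1 hD1 ihm
          have he : ((m:ℝ) - (0:ℕ)*Real.log 2) + 1 = (((m+1:ℕ)):ℝ) - ((0:ℕ):ℝ)*Real.log 2 := by
            push_cast; ring
          rwa [he] at h2
      | succ n ihn =>
        have h2 := KexpAux.dual_step2 hD2 ihn
        have he : ((m:ℝ) - (n:ℕ)*Real.log 2) - Real.log 2
            = ((m:ℕ):ℝ) - (((n+1:ℕ)):ℝ)*Real.log 2 := by
          push_cast; ring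
        rwa [he] at h2
    intro t x hx
    have hcont : Continuous fun s : ℝ => Real.exp s * x 0 - (1 + s) * x 1 - x 2 := by
      fun_prop
    have hclsdS : IsClosed {s : ℝ | 0 ≤ Real.exp s * x 0 - (1 + s) * x 1 - x 2} :=
      isClosed_le continuous_const hcont
    have hsub : KexpAux.Tset ⊆ {s : ℝ | 0 ≤ Real.exp s * x 0 - (1 + s) * x 1 - x 2} := by
      rintro s ⟨m, n, rfl⟩
      have h2 : 0 ≤ Real.exp ((m:ℝ) - (n:ℝ)*Real.log 2) * x 0
          + (-1 - ((m:ℝ) - (n:ℝ)*Real.log 2)) * x 1 + (-1) * x 2 := hstep m n x hx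
      show 0 ≤ Real.exp ((m:ℝ) - (n:ℝ)*Real.log 2) * x 0
          - (1 + ((m:ℝ) - (n:ℝ)*Real.log 2)) * x 1 - x 2
      linarith [h2, (by ring : (-1 - ((m:ℝ) - (n:ℝ)*Real.log 2)) * x 1
        = -((1 + ((m:ℝ) - (n:ℝ)*Real.log 2)) * x 1))]
    have h1 : t ∈ closure KexpAux.Tset := by rw [KexpAux.dense_Tset.closure_eq]; trivial
    exact closure_minimal hsub hclsdS h1
  -- C ⊆ Kexp
  have hCsub : C ⊆ Kexp := by
    intro x hx
    have hf : ∀ t : ℝ, 0 ≤ Real.exp t * x 0 - (1 + t) * x 1 - x 2 := fun t => hdualT t x hx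
    rcases lt_trichotomy (x 1) 0 with h1 | h1 | h1
    · exfalso
      set s := max 0 ((|x 0| - x 2 + 1)/(-(x 1))) with hs
      have hs0 : 0 ≤ s := le_max_left _ _
      have hsle : (|x 0| - x 2 + 1)/(-(x 1)) ≤ s := le_max_right _ _
      have hx1pos : 0 < -(x 1) := by linarith
      have h2 : |x 0| - x 2 + 1 ≤ s * (-(x 1)) := (div_le_iff₀ hx1pos).mp hsle
      have h3 := hf (-(s+1))
      have h4 : Real.exp (-(s+1)) * x 0 ≤ |x 0| := by
        have e1 : Real.exp (-(s+1)) ≤ 1 := Real.exp_le_one_iff.mpr (by linarith)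
        have e2 : Real.exp (-(s+1)) * x 0 ≤ Real.exp (-(s+1)) * |x 0| :=
          mul_le_mul_of_nonneg_left (le_abs_self _) (Real.exp_pos _).le
        have e3 : Real.exp (-(s+1)) * |x 0| ≤ 1 * |x 0| :=
          mul_le_mul_of_nonneg_right e1 (abs_nonneg _)
        linarith
      nlinarith [h3, h4, h2]
    · -- x 1 = 0
      have hx0 : 0 ≤ x 0 := by
        by_contra hneg
        push_neg at hneg
        have hxneg : (0:ℝ) < -(x 0) := by linarith
        have hfpos := hf (Real.log ((|x 2| + 1)/(-(x 0))))
        rw [Real.exp_log (by positivity)] at hfpos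
        have heval : ((|x 2| + 1)/(-(x 0))) * x 0 = -(|x 2| + 1) := by
          field_simp
          rw [div_self (ne_of_lt hneg)]
        rw [h1] at hfpos
        nlinarith [le_abs_self (x 2), neg_abs_le (x 2), hfpos]
      have hx2 : x 2 ≤ 0 := by
        rcases eq_or_lt_of_le hx0 with heq | hlt
        · have h2 := hf 0
          rw [h1] at h2
          simp [Real.exp_zero] at h2
          linarith [h2, heq.symm ▸ (le_refl (x 0))]
        · by_contra hneg
          push_neg at hneg
          have h2 := hf (Real.log (x 2/(2 * x 0)))
          rw [Real.exp_log (by positivity)] at h2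
          have heval : (x 2/(2*x 0)) * x 0 = x 2 / 2 := by
            field_simp
          rw [h1] at h2
          nlinarith [h2]
      exact Or.inr ⟨h1, hx0, hx2⟩
    · -- x 1 > 0
      have hx0 : 0 < x 0 := by
        by_contra hneg
        push_neg at hneg
        have h2 := hf ((|x 2| + 1)/(x 1))
        have hE : Real.exp ((|x 2| + 1)/(x 1)) * x 0 ≤ 0 :=
          mul_nonpos_of_nonneg_of_nonpos (Real.exp_pos _).le hneg
        have ht : (1 + (|x 2| + 1)/(x 1)) * x 1 = x 1 + (|x 2| + 1) := by
          field_simp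
        nlinarith [le_abs_self (x 2), neg_abs_le (x 2), h2, hE]
      have hmain := hf (Real.log (x 1 / x 0))
      rw [Real.exp_log (by positivity)] at hmain
      have hse : (x 1 / x 0) * x 0 = x 1 := by field_simp
      have hlogflip : Real.log (x 1 / x 0) = - Real.log (x 0 / x 1) := by
        rw [← Real.log_inv]
        congr 1
        rw [inv_div]
      have hkey : x 2 / x 1 ≤ Real.log (x 0 / x 1) := by
        rw [div_le_iff₀ h1]
        nlinarith [hmain, hlogflip, hse]
      have hexp : Real.exp (x 2 / x 1) ≤ x 0 / x 1 := by
        calc Real.exp (x 2/x 1) ≤ Real.exp (Real.log (x 0/x 1)) := Real.exp_le_exp.mpr hkey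
        _ = x 0 / x 1 := Real.exp_log (by positivity)
      refine Or.inl ⟨h1, ?_⟩
      have := (le_div_iff₀ h1).mp hexp
      linarith [this]
  -- Kexp ⊆ C
  have hKsub : Kexp ⊆ C := by
    rintro x (⟨hx1, hxe⟩ | ⟨hx1, hx0, hx2⟩)
    · set t := x 2 / x 1 with ht
      have hm1 : (x 1) • (![Real.exp t, 1, t] : Fin 3 → ℝ) ∈ C := hcone _ _ hx1.le (hcurve t)
      have hm2 : (x 0 - x 1 * Real.exp t) • (![1,0,0] : Fin 3 → ℝ) ∈ C :=
        hcone _ _ (by linarith [hxe]) h100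
      have h3 := hadd _ hm1 _ hm2
      have hxeq : x = (x 1) • (![Real.exp t, 1, t] : Fin 3 → ℝ)
          + (x 0 - x 1 * Real.exp t) • (![1,0,0] : Fin 3 → ℝ) := by
        funext i
        fin_cases i
        · show x 0 = x 1 * Real.exp t + (x 0 - x 1 * Real.exp t) * 1
          ring
        · show x 1 = x 1 * 1 + (x 0 - x 1 * Real.exp t) * 0
          ring
        · show x 2 = x 1 * t + (x 0 - x 1 * Real.exp t) * 0
          rw [ht]
          field_simp
          ring
      rw [hxeq]
      exact h3
    · have hm1 : (x 0) • (![1,0,0] : Fin 3 → ℝ) ∈ C := hcone _ _ hx0 h100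
      have hm2 : (-(x 2)) • (![0,0,-1] : Fin 3 → ℝ) ∈ C := hcone _ _ (by linarith) h00m1
      have h3 := hadd _ hm1 _ hm2
      have hxeq : x = (x 0) • (![1,0,0] : Fin 3 → ℝ) + (-(x 2)) • (![0,0,-1] : Fin 3 → ℝ) := by
        funext i
        fin_cases i
        · show x 0 = x 0 * 1 + -(x 2) * 0
          ring
        · show x 1 = x 0 * 0 + -(x 2) * 0
          rw [hx1]; ring
        · show x 2 = x 0 * 0 + -(x 2) * (-1)
          ring
      rw [hxeq]
      exact h3
  exact Set.Subset.antisymm hCsub hKsub
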